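/- For every simple graph G = (V,E), the relation ∼ on V, defined by x ∼ y if and only if N(x) = N(y) or N̄(x) = N̄(y), is an equivalence relation (it is reflexive, symmetric, and transitive). -/

import Mathlib

/-- x ∼ y iff the open neighborhoods coincide or the closed neighborhoods coincide. -/
def simRel {V : Type*} (G : SimpleGraph V) (x y : V) : Prop :=
  G.neighborSet x = G.neighborSet y ∨
    insert x (G.neighborSet x) = insert y (G.neighborSet y)

/-- The relation ∼ is an equivalence relation on the vertex set of any simple graph. -/
theorem simRel_equivalence {V : Type*} (G : SimpleGraph V) :
    Equivalence (simRel G) := by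
  constructor
  · intro x; exact Or.inl rfl
  · intro x y h
    rcases h with h | h
    · exact Or.inl h.symm
    · exact Or.inr h.symm
  · intro x y z h1 h2
    rcases h1 with h1 | h1 <;> rcases h2 with h2 | h2
    · exact Or.inl (h1.trans h2)
    · -- N x = N y, closed y = closed z
      by_cases hxy : x = y
      · subst hxy; exact Or.inr h2
      · left
        have hy : y ∈ insert z (G.neighborSet z) := h2 ▸ Set.mem_insert y _
        rcases hy with rfl | hy
        · exact h1
        · -- z ∈ N y = N x, so x adj z, so x ∈ closed z = closed y : contradiction
          have hz : z ∈ G.neighborSet x := h1 ▸ G.adj_symm hy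
          have hx : x ∈ insert y (G.neighborSet y) := by
            rw [h2]; exact Set.mem_insert_of_mem _ (G.adj_symm hz)
          rcases hx with rfl | hx
          · exact absurd rfl hxy
          · exact absurd (h1 ▸ hx) (G.irrefl)
    · -- closed x = closed y, N y = N z
      by_cases hyz : y = z
      · subst hyz; exact Or.inr h1
      · left
        have hy : y ∈ insert x (G.neighborSet x) := h1.symm ▸ Set.mem_insert y _
        rcases hy with hy | hy
        · subst hy; exact h2
        · -- x adj y, so x ∈ N y = N z, so z adj x, so z ∈ closed x = closed y
          have hx : x ∈ G.neighborSet z := h2 ▸ G.adj_symm hy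
          have hz : z ∈ insert y (G.neighborSet y) := by
            rw [← h1]; exact Set.mem_insert_of_mem _ (G.adj_symm hx)
          rcases hz with hz | hz
          · exact absurd hz.symm hyz
          · exact absurd (h2 ▸ hz) (G.irrefl)
    · exact Or.inr (h1.trans h2)
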